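/- Every Henstock–Kurzweil integrable function on [a,b] is Lebesgue measurable. -/

import Mathlib

def IsTaggedPartition (a b : ℝ) (n : ℕ) (t x : ℕ → ℝ) : Prop :=
  t 0 = a ∧ t n = b ∧ (∀ j < n, t j < t (j + 1)) ∧
    ∀ j < n, x j ∈ Set.Icc (t j) (t (j + 1))

def IsFine (δ : ℝ → ℝ) (n : ℕ) (t x : ℕ → ℝ) : Prop :=
  ∀ j < n, t (j + 1) - t j < δ (x j)

def RiemannSum (g : ℝ → ℝ) (n : ℕ) (t x : ℕ → ℝ) : ℝ :=
  ∑ j ∈ Finset.range n, g (x j) * (t (j + 1) - t j)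

/-- `f` is Henstock–Kurzweil integrable on `[a,b]` with integral `α`. -/
def HKIntegral (a b : ℝ) (f : ℝ → ℝ) (α : ℝ) : Prop :=
  ∀ ε > 0, ∃ δ : ℝ → ℝ, (∀ y ∈ Set.Icc a b, 0 < δ y) ∧
    ∀ (n : ℕ) (t x : ℕ → ℝ), IsTaggedPartition a b n t x → IsFine δ n t x →
      |RiemannSum f n t x - α| < ε

namespace HKAux

open Set

noncomputable section

/-- concatenation of two pieces of data -/
def catF (n : ℕ) (t s : ℕ → ℝ) : ℕ → ℝ := fun j => if j < n then t j else s (j - n)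

lemma catF_left {n : ℕ} {t s : ℕ → ℝ} (h : t n = s 0) {j : ℕ} (hj : j ≤ n) :
    catF n t s j = t j := by
  rcases lt_or_eq_of_le hj with h' | h'
  · simp [catF, h']
  · subst h'; simp [catF, h.symm]

lemma catF_right (n : ℕ) (t s : ℕ → ℝ) (j : ℕ) : catF n t s (n + j) = s j := by
  simp [catF]

lemma sum_range_add' (g : ℕ → ℝ) (n m : ℕ) :
    ∑ j ∈ Finset.range (n + m), g j
      = ∑ j ∈ Finset.range n, g j + ∑ j ∈ Finset.range m, g (n + j) := by
  induction m with
  | zero => simp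
  | succ m ih =>
      rw [← Nat.add_assoc, Finset.sum_range_succ, ih, Finset.sum_range_succ, add_assoc]

lemma concat {a c d : ℝ} {n m : ℕ} {t x s y : ℕ → ℝ}
    (h1 : IsTaggedPartition a c n t x) (h2 : IsTaggedPartition c d m s y) :
    IsTaggedPartition a d (n + m) (catF n t s) (catF n x y)
    ∧ (∀ g : ℝ → ℝ, RiemannSum g (n + m) (catF n t s) (catF n x y)
        = RiemannSum g n t x + RiemannSum g m s y)
    ∧ ∀ δ : ℝ → ℝ, IsFine δ n t x → IsFine δ m s y →
        IsFine δ (n + m) (catF n t s) (catF n x y) := by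
  obtain ⟨ht0, htn, hmono, htag⟩ := h1
  obtain ⟨hs0, hsm, hmono', htag'⟩ := h2
  have key : t n = s 0 := by rw [htn, hs0]
  have eL : ∀ j ≤ n, catF n t s j = t j := fun j hj => catF_left key hj
  have eR : ∀ j, catF n t s (n + j) = s j := catF_right n t s
  have eXL : ∀ j < n, catF n x y j = x j := by intro j hj; simp [catF, hj]
  have eXR : ∀ j, catF n x y (n + j) = y j := catF_right n x y
  have hterm : ∀ j < n, catF n t s (j + 1) = t (j + 1) ∧ catF n t s j = t j := by
    intro j hj; exact ⟨eL _ hj, eL _ hj.le⟩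
  have hterm' : ∀ j, n ≤ j → catF n t s (j + 1) = s (j - n + 1) ∧ catF n t s j = s (j - n) := by
    intro j hj
    obtain ⟨j', rfl⟩ := Nat.exists_eq_add_of_le hj
    constructor
    · have : n + j' + 1 = n + (j' + 1) := by omega
      rw [this, eR]
      simp
    · rw [eR]
      simp
  refine ⟨⟨?_, ?_, ?_, ?_⟩, ?_, ?_⟩
  · rw [eL 0 (Nat.zero_le n), ht0]
  · rcases Nat.eq_zero_or_pos m with hm | hm
    · subst hm
      rw [Nat.add_zero, eL n le_rfl, htn]
      rw [hs0] at hsm; exact hsm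
    · have : n + m = n + m := rfl
      rw [eR m, hsm]
  · intro j hj
    rcases lt_or_ge j n with h' | h'
    · rw [(hterm j h').1, (hterm j h').2]; exact hmono j h'
    · rw [(hterm' j h').1, (hterm' j h').2]
      exact hmono' (j - n) (by omega)
  · intro j hj
    rcases lt_or_ge j n with h' | h'
    · rw [(hterm j h').1, (hterm j h').2, eXL j h']; exact htag j h'
    · rw [(hterm' j h').1, (hterm' j h').2]
      obtain ⟨j', rfl⟩ := Nat.exists_eq_add_of_le h'
      rw [eXR j']
      have := htag' j' (by omega)
      simpa using this
  · intro g
    unfold RiemannSum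
    rw [sum_range_add']
    congr 1
    · apply Finset.sum_congr rfl
      intro j hj
      rw [Finset.mem_range] at hj
      rw [(hterm j hj).1, (hterm j hj).2, eXL j hj]
    · apply Finset.sum_congr rfl
      intro j hj
      rw [Finset.mem_range] at hj
      rw [(hterm' (n + j) (by omega)).1, (hterm' (n + j) (by omega)).2, eXR j]
      simp
  · intro δ hf1 hf2 j hj
    rcases lt_or_ge j n with h' | h'
    · rw [(hterm j h').1, (hterm j h').2, eXL j h']; exact hf1 j h'
    · rw [(hterm' j h').1, (hterm' j h').2]
      obtain ⟨j', rfl⟩ := Nat.exists_eq_add_of_le h'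
      rw [eXR j']
      have := hf2 j' (by omega)
      simpa using this

/-- the trivial partition of a degenerate interval -/
lemma trivialPartition (u : ℝ) :
    IsTaggedPartition u u 0 (fun _ => u) (fun _ => u) ∧ ∀ δ, IsFine δ 0 (fun _ => u) (fun _ => u) := by
  refine ⟨⟨rfl, rfl, fun j hj => absurd hj (Nat.not_lt_zero j),
    fun j hj => absurd hj (Nat.not_lt_zero j)⟩,
    fun δ j hj => absurd hj (Nat.not_lt_zero j)⟩

/-- single-interval tagged partition -/
lemma singlePartition {u v z : ℝ} (huv : u < v) (hz : z ∈ Set.Icc u v) :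
    IsTaggedPartition u v 1 (fun j => if j = 0 then u else v) (fun _ => z)
    ∧ ∀ δ : ℝ → ℝ, v - u < δ z → IsFine δ 1 (fun j => if j = 0 then u else v) (fun _ => z) := by
  constructor
  · refine ⟨rfl, rfl, ?_, ?_⟩
    · intro j hj
      interval_cases j
      simpa using huv
    · intro j hj
      interval_cases j
      simpa using hz
  · intro δ h j hj
    interval_cases j
    simpa using h

lemma riemannSum_single (g : ℝ → ℝ) (u v z : ℝ) :
    RiemannSum g 1 (fun j => if j = 0 then u else v) (fun _ => z) = g z * (v - u) := by
  simp [RiemannSum]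

/-- Cousin's lemma -/
lemma cousin (u v : ℝ) (huv : u ≤ v) (δ : ℝ → ℝ) (hδ : ∀ y ∈ Set.Icc u v, 0 < δ y) :
    ∃ n t x, IsTaggedPartition u v n t x ∧ IsFine δ n t x := by
  set S : Set ℝ := {c | c ∈ Set.Icc u v ∧ ∃ n t x, IsTaggedPartition u c n t x ∧ IsFine δ n t x}
    with hS
  have hu : u ∈ S := ⟨⟨le_refl u, huv⟩, 0, _, _, (trivialPartition u).1, (trivialPartition u).2 δ⟩
  have hbdd : BddAbove S := ⟨v, fun c hc => hc.1.2⟩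
  set s := sSup S with hsdef
  have hs1 : u ≤ s := le_csSup hbdd hu
  have hs2 : s ≤ v := csSup_le ⟨u, hu⟩ (fun c hc => hc.1.2)
  have hδs : 0 < δ s := hδ s ⟨hs1, hs2⟩
  obtain ⟨c, hcS, hc⟩ : ∃ c ∈ S, s - δ s < c :=
    exists_lt_of_lt_csSup ⟨u, hu⟩ (by linarith)
  have hcs : c ≤ s := le_csSup hbdd hcS
  have hsS : s ∈ S := by
    rcases eq_or_lt_of_le hcs with h | h
    · rwa [← h]
    · obtain ⟨⟨hc1, _⟩, n, t, x, hP, hF⟩ := hcS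
      have hsingle := singlePartition h (⟨le_of_lt h, le_refl s⟩ : s ∈ Set.Icc c s)
      have hcat := concat hP hsingle.1
      exact ⟨⟨le_trans hc1 hcs, hs2⟩, _, _, _, hcat.1,
        hcat.2.2 δ hF (hsingle.2 δ (by linarith))⟩
  rcases eq_or_lt_of_le hs2 with h | h
  · obtain ⟨_, n, t, x, hP, hF⟩ := hsS
    exact ⟨n, t, x, h ▸ hP, hF⟩
  · exfalso
    set d := min v (s + δ s / 2) with hd
    have hsd : s < d := lt_min h (by linarith)
    have hdS : d ∈ S := by
      obtain ⟨_, n, t, x, hP, hF⟩ := hsS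
      have hsingle := singlePartition hsd (⟨le_refl s, le_of_lt hsd⟩ : s ∈ Set.Icc s d)
      have hcat := concat hP hsingle.1
      refine ⟨⟨le_trans hs1 hsd.le, min_le_left _ _⟩, _, _, _, hcat.1, hcat.2.2 δ hF ?_⟩
      apply hsingle.2
      have : d ≤ s + δ s / 2 := min_le_right _ _
      linarith
    have : d ≤ s := le_csSup hbdd hdS
    linarith

end
end HKAux

section Chunk2
namespace HKAux
open Set Filter Topology

noncomputable section

/-- δ is a gauge witnessing ε-approximation for the integral α on [a,b] -/
def Gauge (a b : ℝ) (f : ℝ → ℝ) (α ε : ℝ) (δ : ℝ → ℝ) : Prop :=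
  (∀ y ∈ Set.Icc a b, 0 < δ y) ∧
    ∀ n t x, IsTaggedPartition a b n t x → IsFine δ n t x →
      |RiemannSum f n t x - α| < ε

lemma fine_mono {δ δ' : ℝ → ℝ} (h : ∀ y, δ y ≤ δ' y) {n t x} (hF : IsFine δ n t x) :
    IsFine δ' n t x := fun j hj => lt_of_lt_of_le (hF j hj) (h (x j))

/-- two fine partitions of a subinterval have close Riemann sums -/
lemma close {a b u v α ε : ℝ} {f : ℝ → ℝ} {δ : ℝ → ℝ} (hδ : Gauge a b f α ε δ)
    (hu : a ≤ u) (huv : u ≤ v) (hv : v ≤ b)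
    {n t x n' t' x' : _} (hP : IsTaggedPartition u v n t x) (hF : IsFine δ n t x)
    (hP' : IsTaggedPartition u v n' t' x') (hF' : IsFine δ n' t' x') :
    |RiemannSum f n t x - RiemannSum f n' t' x'| < 2 * ε := by
  have hab : a ≤ b := le_trans (le_trans hu huv) hv
  obtain ⟨m1, s1, y1, hQ1, hG1⟩ := cousin a u hu δ
    (fun y hy => hδ.1 y ⟨hy.1, le_trans hy.2 (le_trans huv hv)⟩)
  obtain ⟨m2, s2, y2, hQ2, hG2⟩ := cousin v b hv δ
    (fun y hy => hδ.1 y ⟨le_trans (le_trans hu huv) hy.1, hy.2⟩)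
  have est : ∀ (nt : ℕ) (tt xt : ℕ → ℝ), IsTaggedPartition u v nt tt xt → IsFine δ nt tt xt →
      |RiemannSum f m1 s1 y1 + RiemannSum f nt tt xt + RiemannSum f m2 s2 y2 - α| < ε := by
    intro nt tt xt hPt hFt
    have c1 := concat hQ1 hPt
    have c2 := concat c1.1 hQ2
    have := hδ.2 _ _ _ c2.1 (c2.2.2 δ (c1.2.2 δ hG1 hFt) hG2)
    rwa [c2.2.1 f, c1.2.1 f] at this
  have e1 := est n t x hP hF
  have e2 := est n' t' x' hP' hF'
  rw [abs_lt] at e1 e2 ⊢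
  constructor <;> [linarith; linarith]

lemma exists_fine {u v : ℝ} (huv : u ≤ v) {δ1 δ2 : ℝ → ℝ}
    (h1 : ∀ y ∈ Set.Icc u v, 0 < δ1 y) (h2 : ∀ y ∈ Set.Icc u v, 0 < δ2 y) :
    ∃ n t x, IsTaggedPartition u v n t x ∧ IsFine δ1 n t x ∧ IsFine δ2 n t x := by
  obtain ⟨n, t, x, hP, hF⟩ := cousin u v huv (fun y => min (δ1 y) (δ2 y))
    (fun y hy => lt_min (h1 y hy) (h2 y hy))
  exact ⟨n, t, x, hP, fine_mono (fun y => min_le_left _ _) hF,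
    fine_mono (fun y => min_le_right _ _) hF⟩

/-- existence of the integral on subintervals -/
lemma sub_exists {a b u v α : ℝ} {f : ℝ → ℝ} (hf : HKIntegral a b f α)
    (hu : a ≤ u) (huv : u ≤ v) (hv : v ≤ b) : ∃ β, HKIntegral u v f β := by
  choose δs hpos hgauge using fun k : ℕ => hf (1 / ((k : ℝ) + 1)) (by positivity)
  have hδpos' : ∀ k : ℕ, ∀ y ∈ Set.Icc u v, 0 < δs k y :=
    fun k y hy => hpos k y ⟨le_trans hu hy.1, le_trans hy.2 hv⟩
  choose ns ts xs hP hF using fun k : ℕ => cousin u v huv (δs k) (hδpos' k)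
  set sk : ℕ → ℝ := fun k => RiemannSum f (ns k) (ts k) (xs k) with hsk
  have key : ∀ (k l : ℕ) (n : ℕ) (t x : ℕ → ℝ), IsTaggedPartition u v n t x →
      IsFine (δs k) n t x →
      |RiemannSum f n t x - sk l| < 2 * (1 / ((k : ℝ) + 1)) + 2 * (1 / ((l : ℝ) + 1)) := by
    intro k l n t x hPt hFt
    obtain ⟨n', t', x', hP', hF'1, hF'2⟩ := exists_fine huv (hδpos' k) (hδpos' l)
    have h1 := close ⟨hpos k, hgauge k⟩ hu huv hv hPt hFt hP' hF'1
    have h2 := close ⟨hpos l, hgauge l⟩ hu huv hv (hP l) (hF l) hP' hF'2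
    rw [abs_lt] at h1 h2 ⊢
    constructor <;> [linarith; linarith]
  have hmono : ∀ k l : ℕ, k ≤ l → (1 : ℝ) / ((l : ℝ) + 1) ≤ 1 / ((k : ℝ) + 1) := by
    intro k l hkl
    apply one_div_le_one_div_of_le (by positivity)
    have : (k : ℝ) ≤ l := Nat.cast_le.mpr hkl
    linarith
  have hcauchy : CauchySeq sk := by
    rw [Metric.cauchySeq_iff]
    intro ε hε
    have htend : Tendsto (fun k : ℕ => 4 * (1 / ((k : ℝ) + 1))) atTop (𝓝 0) := by
      simpa using tendsto_one_div_add_atTop_nhds_zero_nat.const_mul (4:ℝ)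
    obtain ⟨K, hK⟩ := (htend.eventually_lt_const hε).exists_forall_of_atTop
    refine ⟨K, fun m hm n hn => ?_⟩
    rw [Real.dist_eq]
    have := key m n (ns m) (ts m) (xs m) (hP m) (hF m)
    have b1 := hmono K m hm
    have b2 := hmono K n hn
    have := hK K le_rfl
    linarith [key m n (ns m) (ts m) (xs m) (hP m) (hF m)]
  obtain ⟨β, hβ⟩ := cauchySeq_tendsto_of_complete hcauchy
  refine ⟨β, fun ε hε => ?_⟩
  have htend : Tendsto (fun k : ℕ => 2 * (1 / ((k : ℝ) + 1))) atTop (𝓝 0) := by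
    simpa using tendsto_one_div_add_atTop_nhds_zero_nat.const_mul (2:ℝ)
  obtain ⟨K, hK⟩ := (htend.eventually_lt_const hε).exists_forall_of_atTop
  have hKε : 2 * (1 / ((K : ℝ) + 1)) < ε := hK K le_rfl
  refine ⟨δs K, hδpos' K, fun n t x hPt hFt => ?_⟩
  have lim1 : Tendsto (fun l => |RiemannSum f n t x - sk l|) atTop
      (𝓝 |RiemannSum f n t x - β|) := (tendsto_const_nhds.sub hβ).abs
  have lim2 : Tendsto (fun l : ℕ => 2 * (1 / ((K : ℝ) + 1)) + 2 * (1 / ((l : ℝ) + 1))) atTop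
      (𝓝 (2 * (1 / ((K : ℝ) + 1)))) := by
    have : Tendsto (fun l : ℕ => 2 * (1 / ((l : ℝ) + 1))) atTop (𝓝 0) := by
      simpa using tendsto_one_div_add_atTop_nhds_zero_nat.const_mul (2:ℝ)
    simpa using tendsto_const_nhds.add this
  have hle : |RiemannSum f n t x - β| ≤ 2 * (1 / ((K : ℝ) + 1)) :=
    le_of_tendsto_of_tendsto' lim1 lim2 (fun l => (key K l n t x hPt hFt).le)
  exact lt_of_le_of_lt hle hKε

/-- uniqueness of the HK integral -/
lemma unique {u v : ℝ} {f : ℝ → ℝ} {β γ : ℝ} (huv : u ≤ v)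
    (h1 : HKIntegral u v f β) (h2 : HKIntegral u v f γ) : β = γ := by
  by_contra hne
  have hpos : 0 < |β - γ| := abs_pos.mpr (sub_ne_zero.mpr hne)
  obtain ⟨δ1, hp1, hg1⟩ := h1 (|β - γ| / 2) (by linarith)
  obtain ⟨δ2, hp2, hg2⟩ := h2 (|β - γ| / 2) (by linarith)
  obtain ⟨n, t, x, hPt, hF1, hF2⟩ := exists_fine huv hp1 hp2
  have e1 := hg1 n t x hPt hF1
  have e2 := hg2 n t x hPt hF2
  have h3 := abs_sub_le β (RiemannSum f n t x) γ
  have e1x : |β - RiemannSum f n t x| < |β - γ| / 2 := by rw [abs_sub_comm]; exact e1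
  linarith

open Classical in
/-- the subinterval integral as a function -/
def HKI (f : ℝ → ℝ) (u v : ℝ) : ℝ :=
  if h : ∃ β, HKIntegral u v f β then h.choose else 0

lemma HKI_int {f : ℝ → ℝ} {u v β : ℝ} (h : HKIntegral u v f β) :
    HKIntegral u v f (HKI f u v) := by
  unfold HKI
  split
  next hx => exact hx.choose_spec
  next hx => exact absurd ⟨β, h⟩ hx

lemma HKI_eq {f : ℝ → ℝ} {u v β : ℝ} (huv : u ≤ v) (h : HKIntegral u v f β) :
    HKI f u v = β := unique huv (HKI_int h) h

lemma HKI_self {f : ℝ → ℝ} {u v β : ℝ} (huv : u = v) (h : HKIntegral u v f β) :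
    HKI f u v = β := HKI_eq huv.le h

/-- additivity of the subinterval integral -/
lemma HKI_add {a b u v w α : ℝ} {f : ℝ → ℝ} (hf : HKIntegral a b f α)
    (hu : a ≤ u) (huv : u ≤ v) (hvw : v ≤ w) (hw : w ≤ b) :
    HKI f u w = HKI f u v + HKI f v w := by
  obtain ⟨β1, hβ1⟩ := sub_exists hf hu huv ((le_trans hvw hw))
  obtain ⟨β2, hβ2⟩ := sub_exists hf (le_trans hu huv) hvw hw
  obtain ⟨β3, hβ3⟩ := sub_exists hf hu (le_trans huv hvw) hw
  have h1 := HKI_int hβ1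
  have h2 := HKI_int hβ2
  have h3 := HKI_int hβ3
  have main : ∀ ε > (0:ℝ), |HKI f u v + HKI f v w - HKI f u w| < ε := by
    intro ε hε
    obtain ⟨δ1, hp1, hg1⟩ := h1 (ε / 3) (by linarith)
    obtain ⟨δ2, hp2, hg2⟩ := h2 (ε / 3) (by linarith)
    obtain ⟨δ3, hp3, hg3⟩ := h3 (ε / 3) (by linarith)
    have hp3uv : ∀ y ∈ Set.Icc u v, 0 < δ3 y :=
      fun y hy => hp3 y ⟨hy.1, le_trans hy.2 hvw⟩
    have hp3vw : ∀ y ∈ Set.Icc v w, 0 < δ3 y :=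
      fun y hy => hp3 y ⟨le_trans huv hy.1, hy.2⟩
    obtain ⟨n1, t1, x1, hPa, hFa1, hFa3⟩ := exists_fine huv hp1 hp3uv
    obtain ⟨n2, t2, x2, hPb, hFb2, hFb3⟩ := exists_fine hvw hp2 hp3vw
    have c := concat hPa hPb
    have e3 := hg3 _ _ _ c.1 (c.2.2 δ3 hFa3 hFb3)
    rw [c.2.1 f] at e3
    have e1 := hg1 n1 t1 x1 hPa hFa1
    have e2 := hg2 n2 t2 x2 hPb hFb2
    rw [abs_lt] at e1 e2 e3 ⊢
    constructor <;> [linarith; linarith]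
  by_contra hne
  have h0 : HKI f u v + HKI f v w - HKI f u w ≠ 0 := by
    intro h; apply hne; linarith [h]
  exact lt_irrefl _ (main _ (abs_pos.mpr h0))

lemma HKI_ab {a b α : ℝ} {f : ℝ → ℝ} (hab : a ≤ b) (hf : HKIntegral a b f α) :
    HKI f a b = α := HKI_eq hab hf

/-- filling a gap with a fine partition whose sum approximates the integral -/
lemma fill {a b u v α θ : ℝ} {f : ℝ → ℝ} {δ : ℝ → ℝ} (hf : HKIntegral a b f α)
    (hδpos : ∀ y ∈ Set.Icc a b, 0 < δ y)
    (hu : a ≤ u) (huv : u ≤ v) (hv : v ≤ b) (hθ : 0 < θ) :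
    ∃ n t x, IsTaggedPartition u v n t x ∧ IsFine δ n t x ∧
      |RiemannSum f n t x - HKI f u v| < θ := by
  obtain ⟨β, hβ⟩ := sub_exists hf hu huv hv
  obtain ⟨δ', hp', hg'⟩ := HKI_int hβ θ hθ
  obtain ⟨n, t, x, hPt, hF1, hF2⟩ := exists_fine huv
    (fun y hy => hδpos y ⟨le_trans hu hy.1, le_trans hy.2 hv⟩) hp'
  exact ⟨n, t, x, hPt, hF1, hg' n t x hPt hF2⟩

end
end HKAux
end Chunk2
section Chunk3
namespace HKAux
open Set Filter Topology

noncomputable section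

lemma part_mono {n : ℕ} {t : ℕ → ℝ} (h3 : ∀ j < n, t j < t (j + 1)) :
    ∀ i j, i ≤ j → j ≤ n → t i ≤ t j := by
  intro i j hij
  induction j, hij using Nat.le_induction with
  | base => intro _; exact le_rfl
  | succ j hij ih => intro hj; exact le_trans (ih (by omega)) (le_of_lt (h3 j (by omega)))

lemma riemannSum_zero (g : ℝ → ℝ) (t x : ℕ → ℝ) : RiemannSum g 0 t x = 0 := by
  simp [RiemannSum]

lemma HK_refl (f : ℝ → ℝ) (u : ℝ) : HKIntegral u u f 0 := by
  intro ε hε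
  refine ⟨fun _ => 1, fun y _ => one_pos, fun n t x hP hF => ?_⟩
  have hn : n = 0 := by
    by_contra hn
    have h1 : t 1 ≤ t n := part_mono hP.2.2.1 1 n (by omega) le_rfl
    have h2 : t 0 < t 1 := hP.2.2.1 0 (by omega)
    have := hP.1
    have := hP.2.1
    linarith [hP.1, hP.2.1]
  subst hn
  rw [riemannSum_zero]
  simpa using hε

lemma HKI_refl (f : ℝ → ℝ) (u : ℝ) : HKI f u u = 0 := HKI_eq le_rfl (HK_refl f u)

/-- Saks–Henstock: partial tagged partitions estimate -/
lemma saks_henstock {a b α ε : ℝ} {f δ : ℝ → ℝ} (hf : HKIntegral a b f α) (hab : a ≤ b)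
    (hδ : Gauge a b f α ε δ)
    (N : ℕ) (P Q Z : ℕ → ℝ)
    (hin : ∀ i < N, a ≤ P i ∧ P i < Q i ∧ Q i ≤ b)
    (hchain : ∀ i j, i < j → j < N → Q i ≤ P j)
    (hZ : ∀ i < N, Z i ∈ Set.Icc (P i) (Q i) ∧ Q i - P i < δ (Z i)) :
    |∑ i ∈ Finset.range N, (f (Z i) * (Q i - P i) - HKI f (P i) (Q i))| ≤ ε := by
  set Sg : ℝ := ∑ i ∈ Finset.range N, (f (Z i) * (Q i - P i) - HKI f (P i) (Q i)) with hSgdef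
  by_contra hlt
  push_neg at hlt
  set θ : ℝ := (|Sg| - ε) / (2 * (N + 1)) with hθdef
  have hθ : 0 < θ := by
    apply div_pos (by linarith) (by positivity)
  -- endpoints
  set E : ℕ → ℝ := fun k => if k = 0 then a else Q (k - 1) with hE
  have hE0 : E 0 = a := rfl
  have hEb : ∀ k ≤ N, a ≤ E k ∧ E k ≤ b := by
    intro k hk
    match k with
    | 0 => exact ⟨le_rfl, hab⟩
    | (k' + 1) =>
      have h := hin k' (by omega)
      have : E (k' + 1) = Q k' := by simp [hE]
      rw [this]
      exact ⟨le_trans h.1 h.2.1.le, h.2.2⟩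
  have hEP : ∀ k < N, E k ≤ P k := by
    intro k hk
    match k with
    | 0 => exact (hin 0 hk).1
    | (k' + 1) =>
      have : E (k' + 1) = Q k' := by simp [hE]
      rw [this]
      exact hchain k' (k' + 1) (by omega) hk
  have claim : ∀ k ≤ N, ∃ n t x, IsTaggedPartition a (E k) n t x ∧ IsFine δ n t x ∧
      |RiemannSum f n t x - (HKI f a (E k)
        + ∑ i ∈ Finset.range k, (f (Z i) * (Q i - P i) - HKI f (P i) (Q i)))| ≤ (k : ℝ) * θ := by
    intro k hk
    induction k with
    | zero =>
      refine ⟨0, fun _ => a, fun _ => a, (trivialPartition a).1, (trivialPartition a).2 δ, ?_⟩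
      rw [riemannSum_zero, hE0, HKI_refl]
      simp
    | succ k ih =>
      obtain ⟨n1, t1, x1, hP1, hF1, hB1⟩ := ih (by omega)
      have hkN : k < N := by omega
      have hk' := hin k hkN
      have hZk := hZ k hkN
      have hEk := hEb k (by omega)
      have hEPk := hEP k hkN
      obtain ⟨n2, t2, x2, hP2, hF2, hB2⟩ := fill hf hδ.1 hEk.1 hEPk
        (le_trans hk'.2.1.le hk'.2.2) hθ
      have hsingle := singlePartition hk'.2.1 hZk.1
      have c1 := concat hP1 hP2
      have c2 := concat c1.1 hsingle.1
      have hEk1 : E (k + 1) = Q k := by simp [hE]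
      refine ⟨_, _, _, hEk1 ▸ c2.1, c2.2.2 δ (c1.2.2 δ hF1 hF2) (hsingle.2 δ hZk.2), ?_⟩
      rw [c2.2.1 f, c1.2.1 f, riemannSum_single]
      have hsplit : HKI f a (E (k + 1)) = HKI f a (E k) + HKI f (E k) (P k) + HKI f (P k) (Q k) := by
        rw [hEk1]
        rw [HKI_add hf le_rfl hEk.1 (le_trans hEPk hk'.2.1.le) hk'.2.2,
          HKI_add hf hEk.1 hEPk hk'.2.1.le hk'.2.2]
        ring
      rw [hsplit, Finset.sum_range_succ]
      have harr : RiemannSum f n1 t1 x1 + RiemannSum f n2 t2 x2 + f (Z k) * (Q k - P k) -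
          (HKI f a (E k) + HKI f (E k) (P k) + HKI f (P k) (Q k) +
            (∑ i ∈ Finset.range k, (f (Z i) * (Q i - P i) - HKI f (P i) (Q i)) +
              (f (Z k) * (Q k - P k) - HKI f (P k) (Q k))))
          = (RiemannSum f n1 t1 x1 - (HKI f a (E k)
              + ∑ i ∈ Finset.range k, (f (Z i) * (Q i - P i) - HKI f (P i) (Q i))))
            + (RiemannSum f n2 t2 x2 - HKI f (E k) (P k)) := by ring
      rw [harr]
      calc |_ + _| ≤ _ + _ := abs_add_le _ _
        _ ≤ (k : ℝ) * θ + θ := add_le_add hB1 hB2.le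
        _ = ((k : ℝ) + 1) * θ := by ring
        _ = ((k + 1 : ℕ) : ℝ) * θ := by push_cast; ring
  obtain ⟨n1, t1, x1, hP1, hF1, hB1⟩ := claim N le_rfl
  have hEN := hEb N le_rfl
  obtain ⟨n2, t2, x2, hP2, hF2, hB2⟩ := fill hf hδ.1 hEN.1 hEN.2 le_rfl hθ
  have c := concat hP1 hP2
  have efull := hδ.2 _ _ _ c.1 (c.2.2 δ hF1 hF2)
  rw [c.2.1 f] at efull
  have hα : α = HKI f a (E N) + HKI f (E N) b := by
    rw [← HKI_add hf le_rfl hEN.1 hEN.2 le_rfl, HKI_ab hab hf]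
  have habs : |Sg| ≤ (N : ℝ) * θ + θ + ε := by
    have harr : Sg = -((RiemannSum f n1 t1 x1 - (HKI f a (E N) + Sg))
        + (RiemannSum f n2 t2 x2 - HKI f (E N) b)
        - (RiemannSum f n1 t1 x1 + RiemannSum f n2 t2 x2 - α)) := by
      rw [hα]; ring
    rw [harr, abs_neg]
    have h1 := abs_add_le (RiemannSum f n1 t1 x1 - (HKI f a (E N) + Sg))
      (RiemannSum f n2 t2 x2 - HKI f (E N) b)
    have h2 := abs_sub ((RiemannSum f n1 t1 x1 - (HKI f a (E N) + Sg))
        + (RiemannSum f n2 t2 x2 - HKI f (E N) b))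
      (RiemannSum f n1 t1 x1 + RiemannSum f n2 t2 x2 - α)
    calc |_| ≤ |(RiemannSum f n1 t1 x1 - (HKI f a (E N) + Sg))
        + (RiemannSum f n2 t2 x2 - HKI f (E N) b)|
        + |RiemannSum f n1 t1 x1 + RiemannSum f n2 t2 x2 - α| := abs_sub _ _
      _ ≤ (N : ℝ) * θ + θ + ε := by
          have := abs_add_le (RiemannSum f n1 t1 x1 - (HKI f a (E N) + Sg))
            (RiemannSum f n2 t2 x2 - HKI f (E N) b)
          have hb1 : |RiemannSum f n1 t1 x1 - (HKI f a (E N) + Sg)| ≤ (N : ℝ) * θ := hB1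
          linarith [efull.le]
  have heq : (N : ℝ) * θ + θ = (|Sg| - ε) / 2 := by
    rw [hθdef]
    field_simp
  linarith
end
end HKAux
end Chunk3
section Chunk4
namespace HKAux
open Set Filter Topology

noncomputable section

/-- single-interval Saks-Henstock -/
lemma sh_single {a b α ε : ℝ} {f δ : ℝ → ℝ} (hf : HKIntegral a b f α) (hab : a ≤ b)
    (hδ : Gauge a b f α ε δ) {u v z : ℝ} (hu : a ≤ u) (huv : u < v) (hv : v ≤ b)
    (hz : z ∈ Set.Icc u v) (hfine : v - u < δ z) :
    |f z * (v - u) - HKI f u v| ≤ ε := by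
  have := saks_henstock hf hab hδ 1 (fun _ => u) (fun _ => v) (fun _ => z)
    (fun i _ => ⟨hu, huv, hv⟩) (fun i j hij hj => by omega) (fun i _ => ⟨hz, hfine⟩)
  simpa using this

def clamp (a b c : ℝ) : ℝ := max a (min c b)

lemma clamp_mem {a b : ℝ} (hab : a ≤ b) (c : ℝ) : clamp a b c ∈ Set.Icc a b :=
  ⟨le_max_left _ _, max_le hab (min_le_right _ _)⟩

lemma clamp_eq {a b c : ℝ} (hab : a ≤ c) (hcb : c ≤ b) : clamp a b c = c := by
  unfold clamp
  rw [min_eq_left hcb, max_eq_right hab]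

lemma clamp_lip (a b c y : ℝ) : |clamp a b y - clamp a b c| ≤ |y - c| := by
  unfold clamp
  have h1 : |max a (min y b) - max a (min c b)| ≤ |min y b - min c b| := by
    rw [max_comm a (min y b), max_comm a (min c b)]
    exact abs_max_sub_max_le_abs _ _ _
  have h2 : |min y b - min c b| ≤ |y - c| := by
    have h3 := abs_min_sub_min_le_max y b c b
    have h4 : max |y - c| |b - b| = |y - c| := by
      rw [sub_self, abs_zero]
      exact max_eq_left (abs_nonneg _)
    rw [h4] at h3
    exact h3
  exact le_trans h1 h2

/-- small intervals touching a point z have small integral -/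
lemma small_int {a b α ε : ℝ} {f δ : ℝ → ℝ} (hf : HKIntegral a b f α) (hab : a ≤ b)
    (hδ : Gauge a b f α ε δ) {u v z : ℝ} (hu : a ≤ u) (huv : u ≤ v) (hv : v ≤ b)
    (hz : z ∈ Set.Icc u v) (hfine : v - u < δ z) :
    |HKI f u v| ≤ |f z| * (v - u) + ε := by
  rcases eq_or_lt_of_le huv with h | h
  · subst h
    rw [HKI_refl, abs_zero]
    have hε : 0 < ε := by
      obtain ⟨n, t, x, hP, hF⟩ := cousin a b hab δ hδ.1
      exact lt_of_le_of_lt (abs_nonneg _) (hδ.2 n t x hP hF)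
    nlinarith [abs_nonneg (f z)]
  · have h1 := sh_single hf hab hδ hu h hv hz hfine
    have h2 : |HKI f u v| ≤ |f z * (v - u)| + |f z * (v - u) - HKI f u v| := by
      have h5 := abs_sub (f z * (v - u)) (f z * (v - u) - HKI f u v)
      rwa [sub_sub_cancel] at h5
    rw [abs_mul, abs_of_nonneg (by linarith : (0:ℝ) ≤ v - u)] at h2
    linarith

/-- continuity of the indefinite integral -/
lemma F_continuous {a b α : ℝ} {f : ℝ → ℝ} (hf : HKIntegral a b f α) (hab : a ≤ b) :
    Continuous (fun c => HKI f a (clamp a b c)) := by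
  rw [Metric.continuous_iff]
  intro c ε hε
  set c' := clamp a b c with hc'def
  have hc' : c' ∈ Set.Icc a b := clamp_mem hab c
  obtain ⟨δ, hδpos, hδg⟩ := hf (ε / 3) (by linarith)
  have hδc : 0 < δ c' := hδpos c' hc'
  set M := |f c'| with hM
  set ρ2 := ε / (3 * (M + 1)) with hρ2
  have hM0 : 0 ≤ M := abs_nonneg _
  have hρ2pos : 0 < ρ2 := by positivity
  have heq : (M + 1) * ρ2 = ε / 3 := by
    rw [hρ2]
    field_simp
  refine ⟨min (δ c') ρ2, lt_min hδc hρ2pos, fun y hy => ?_⟩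
  set y' := clamp a b y with hy'def
  have hy' : y' ∈ Set.Icc a b := clamp_mem hab y
  have hlip : |y' - c'| ≤ |y - c| := clamp_lip a b c y
  have hdy : |y' - c'| < min (δ c') ρ2 := lt_of_le_of_lt hlip (by rwa [Real.dist_eq] at hy)
  have hbound : ∀ u v : ℝ, a ≤ u → u ≤ v → v ≤ b → c' ∈ Set.Icc u v → v - u < δ c' →
      v - u ≤ ρ2 → |HKI f u v| < ε := by
    intro u v hu huv hv hmem hfine hle
    have h1 := small_int hf hab ⟨hδpos, hδg⟩ hu huv hv hmem hfine
    have h2 : M * (v - u) ≤ M * ρ2 := mul_le_mul_of_nonneg_left hle hM0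
    have h3 : M * ρ2 = ε / 3 - ρ2 := by linarith
    linarith
  rw [Real.dist_eq]
  rcases le_total c' y' with h | h
  · have key : HKI f a y' = HKI f a c' + HKI f c' y' :=
      HKI_add hf le_rfl hc'.1 h hy'.2
    have : HKI f a y' - HKI f a c' = HKI f c' y' := by linarith
    rw [this]
    have habs : y' - c' < min (δ c') ρ2 := lt_of_le_of_lt (le_abs_self _) hdy
    exact hbound c' y' hc'.1 h hy'.2 ⟨le_rfl, h⟩ (lt_of_lt_of_le habs (min_le_left _ _))
      (le_of_lt (lt_of_lt_of_le habs (min_le_right _ _)))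
  · have key : HKI f a c' = HKI f a y' + HKI f y' c' :=
      HKI_add hf le_rfl hy'.1 h hc'.2
    have heq2 : HKI f a y' - HKI f a c' = -(HKI f y' c') := by linarith
    rw [heq2, abs_neg]
    have habs : c' - y' < min (δ c') ρ2 := by
      rw [abs_sub_comm] at hdy
      exact lt_of_le_of_lt (le_abs_self _) hdy
    exact hbound y' c' hy'.1 h hc'.2 ⟨h, le_rfl⟩ (lt_of_lt_of_le habs (min_le_left _ _))
      (le_of_lt (lt_of_lt_of_le habs (min_le_right _ _)))

end
end HKAux
end Chunk4
section Chunk5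
namespace HKAux
open Set Filter Topology
open scoped Classical

noncomputable section

lemma exists_chain : ∀ (n : ℕ) (s : Finset (ℝ × ℝ)),
    s.card = n →
    ((↑s : Set (ℝ × ℝ)).PairwiseDisjoint (fun p => Set.Icc p.1 p.2)) →
    (∀ p ∈ s, p.1 < p.2) →
    ∃ (N : ℕ) (P Q : ℕ → ℝ), (∀ i < N, (P i, Q i) ∈ s) ∧
      (∀ i j, i < j → j < N → Q i ≤ P j) ∧
      ∀ G : ℝ × ℝ → ℝ, ∑ i ∈ Finset.range N, G (P i, Q i) = ∑ p ∈ s, G p := by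
  intro n
  induction n with
  | zero =>
    intro s hcard _ _
    rw [Finset.card_eq_zero] at hcard
    subst hcard
    exact ⟨0, fun _ => 0, fun _ => 0, fun i hi => absurd hi (Nat.not_lt_zero i),
      fun i j hij hj => absurd hj (Nat.not_lt_zero j), fun G => by simp⟩
  | succ n ih =>
    intro s hcard hdisj hlt
    have hne : s.Nonempty := by rw [← Finset.card_pos, hcard]; omega
    obtain ⟨m, hm, hmax⟩ := Finset.exists_max_image s Prod.fst hne
    set s' := s.erase m with hs'
    have hcard' : s'.card = n := by rw [hs', Finset.card_erase_of_mem hm, hcard]; omega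
    have hsub : s' ⊆ s := Finset.erase_subset m s
    obtain ⟨N, P, Q, h1, h2, h3⟩ := ih s' hcard'
      (hdisj.subset (by exact_mod_cast hsub)) (fun p hp => hlt p (hsub hp))
    refine ⟨N + 1, fun i => if i < N then P i else m.1,
      fun i => if i < N then Q i else m.2, ?_, ?_, ?_⟩
    · intro i hi
      by_cases h : i < N
      · simp only [if_pos h]
        exact hsub (h1 i h)
      · simp only [if_neg h]
        exact hm
    · intro i j hij hj
      by_cases hjN : j < N
      · have hiN : i < N := lt_trans hij hjN
        simp only [if_pos hjN, if_pos hiN]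
        exact h2 i j hij hjN
      · have hiN : i < N := by omega
        simp only [if_pos hiN, if_neg hjN]
        have hp := h1 i hiN
        have hpm : (P i, Q i) ≠ m := Finset.ne_of_mem_erase hp
        have hfst : P i ≤ m.1 := hmax (P i, Q i) (hsub hp)
        by_contra hQ
        push_neg at hQ
        have hd := hdisj (by exact_mod_cast hsub hp) (by exact_mod_cast hm) hpm
        exact Set.disjoint_left.mp hd ⟨hfst, hQ.le⟩ ⟨le_rfl, (hlt m hm).le⟩
    · intro G
      rw [Finset.sum_range_succ]
      have e1 : ∑ i ∈ Finset.range N,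
          G (if i < N then P i else m.1, if i < N then Q i else m.2)
          = ∑ i ∈ Finset.range N, G (P i, Q i) := by
        apply Finset.sum_congr rfl
        intro i hi
        rw [Finset.mem_range] at hi
        simp [hi]
      rw [e1, h3 G]
      simp only [lt_irrefl, if_neg (lt_irrefl N)]
      exact Finset.sum_erase_add s G hm

/-- the total length of disjoint "bad" intervals is small -/
lemma sum_bound {a b α η ε : ℝ} {f δ : ℝ → ℝ} (hf : HKIntegral a b f α) (hab : a ≤ b)
    (hδ : Gauge a b f α ε δ) (hη : 0 < η)
    (s : Finset (ℝ × ℝ))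
    (hdisj : (↑s : Set (ℝ × ℝ)).PairwiseDisjoint (fun p => Set.Icc p.1 p.2))
    (hmem : ∀ p ∈ s, a ≤ p.1 ∧ p.1 < p.2 ∧ p.2 ≤ b ∧ p.2 - p.1 < δ p.1 ∧
      η * (p.2 - p.1) < |f p.1 * (p.2 - p.1) - HKI f p.1 p.2|) :
    ∑ p ∈ s, (p.2 - p.1) ≤ 2 * ε / η := by
  set err : ℝ × ℝ → ℝ := fun p => f p.1 * (p.2 - p.1) - HKI f p.1 p.2 with herr
  have hSH : ∀ r : Finset (ℝ × ℝ), r ⊆ s → |∑ p ∈ r, err p| ≤ ε := by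
    intro r hr
    obtain ⟨N, P, Q, h1, h2, h3⟩ := exists_chain r.card r rfl
      (hdisj.subset (by exact_mod_cast hr)) (fun p hp => (hmem p (hr hp)).2.1)
    have hin : ∀ i < N, a ≤ P i ∧ P i < Q i ∧ Q i ≤ b := by
      intro i hi
      have := hmem _ (hr (h1 i hi))
      exact ⟨this.1, this.2.1, this.2.2.1⟩
    have hZ : ∀ i < N, P i ∈ Set.Icc (P i) (Q i) ∧ Q i - P i < δ (P i) := by
      intro i hi
      have := hmem _ (hr (h1 i hi))
      exact ⟨⟨le_rfl, this.2.1.le⟩, this.2.2.2.1⟩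
    have := saks_henstock hf hab hδ N P Q P hin h2 hZ
    rwa [h3 err] at this
  have hposb : η * ∑ p ∈ s.filter (fun p => 0 ≤ err p), (p.2 - p.1) ≤ ε := by
    set r := s.filter (fun p => 0 ≤ err p) with hr
    have h1 : ∑ p ∈ r, η * (p.2 - p.1) ≤ ∑ p ∈ r, err p := by
      apply Finset.sum_le_sum
      intro p hp
      rw [hr, Finset.mem_filter] at hp
      have h := (hmem p hp.1).2.2.2.2
      have h0 : (0:ℝ) ≤ f p.1 * (p.2 - p.1) - HKI f p.1 p.2 := hp.2
      rw [abs_of_nonneg h0] at h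
      exact h.le
    have h2 : ∑ p ∈ r, err p ≤ |∑ p ∈ r, err p| := le_abs_self _
    have h3 := hSH r (Finset.filter_subset _ _)
    rw [Finset.mul_sum]
    linarith
  have hnegb : η * ∑ p ∈ s.filter (fun p => ¬ 0 ≤ err p), (p.2 - p.1) ≤ ε := by
    set r := s.filter (fun p => ¬ 0 ≤ err p) with hr
    have h1 : ∑ p ∈ r, η * (p.2 - p.1) ≤ ∑ p ∈ r, -err p := by
      apply Finset.sum_le_sum
      intro p hp
      rw [hr, Finset.mem_filter] at hp
      have h := (hmem p hp.1).2.2.2.2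
      have h0 : f p.1 * (p.2 - p.1) - HKI f p.1 p.2 < 0 := not_le.mp hp.2
      rw [abs_of_neg h0] at h
      exact h.le
    rw [Finset.sum_neg_distrib] at h1
    have h2 : -∑ p ∈ r, err p ≤ |∑ p ∈ r, err p| := neg_le_abs _
    have h3 := hSH r (Finset.filter_subset _ _)
    rw [Finset.mul_sum]
    linarith
  have hsplit : ∑ p ∈ s.filter (fun p => 0 ≤ err p), (p.2 - p.1)
      + ∑ p ∈ s.filter (fun p => ¬ 0 ≤ err p), (p.2 - p.1) = ∑ p ∈ s, (p.2 - p.1) :=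
    Finset.sum_filter_add_sum_filter_not s _ _
  rw [le_div_iff₀ hη]
  nlinarith [hposb, hnegb, hsplit]

end
end HKAux
end Chunk5
section Chunk6
namespace HKAux
open Set Filter Topology MeasureTheory Metric
open scoped ENNReal NNReal

noncomputable section

/-- the set where the derivative of the indefinite integral differs from f by more
than η (from the right) is null -/
lemma bad_null {a b α η : ℝ} {f : ℝ → ℝ} (hf : HKIntegral a b f α) (hab : a ≤ b) (hη : 0 < η) :
    volume {x : ℝ | x ∈ Set.Icc a b ∧ ∀ ρ > (0:ℝ), ∃ v, x < v ∧ v ≤ b ∧ v - x ≤ ρ ∧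
      η * (v - x) < |f x * (v - x) - HKI f x v|} = 0 := by
  set E := {x : ℝ | x ∈ Set.Icc a b ∧ ∀ ρ > (0:ℝ), ∃ v, x < v ∧ v ≤ b ∧ v - x ≤ ρ ∧
      η * (v - x) < |f x * (v - x) - HKI f x v|} with hE
  have hEsub : E ⊆ Set.Icc a b := fun x hx => hx.1
  have hfin : volume E < ⊤ := by
    calc volume E ≤ volume (Set.Icc a b) := measure_mono hEsub
      _ = ENNReal.ofReal (b - a) := Real.volume_Icc
      _ < ⊤ := ENNReal.ofReal_lt_top
  suffices hbound : ∀ ε > (0:ℝ), volume E ≤ ENNReal.ofReal (2 * ε / η) by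
    by_contra h0
    have hpos : 0 < (volume E).toReal := ENNReal.toReal_pos h0 hfin.ne
    set v := (volume E).toReal with hv
    have h1 := hbound (η * v / 8) (by positivity)
    have h2 : 2 * (η * v / 8) / η = v / 4 := by field_simp; ring
    rw [h2] at h1
    have h3 : ENNReal.ofReal (v / 4) < ENNReal.ofReal v := by
      rw [ENNReal.ofReal_lt_ofReal_iff (by positivity)]
      linarith
    rw [ENNReal.ofReal_toReal hfin.ne] at h3
    exact absurd (lt_of_le_of_lt h1 h3) (lt_irrefl _)
  intro ε hε
  obtain ⟨δ, hδpos, hδg⟩ := hf ε hε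
  set t : Set (ℝ × ℝ) := {p : ℝ × ℝ | p.1 ∈ E ∧ p.1 < p.2 ∧ p.2 ≤ b ∧ p.2 - p.1 < δ p.1 ∧
      η * (p.2 - p.1) < |f p.1 * (p.2 - p.1) - HKI f p.1 p.2|} with ht
  obtain ⟨u, hut, hcount, hdisj, hcover⟩ := Vitali.exists_disjoint_covering_ae
    (volume : Measure ℝ) E t 6 (fun p => p.2 - p.1) (fun p => p.1)
    (fun p => Set.Icc p.1 p.2)
    (by
      intro p hp
      rw [Real.closedBall_eq_Icc]
      apply Set.Icc_subset_Icc
      · have := hp.2.1; linarith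
      · have := hp.2.1; linarith)
    (by
      intro p hp
      rw [Real.volume_closedBall, Real.volume_Icc]
      have hr : (0:ℝ) ≤ p.2 - p.1 := by have := hp.2.1; linarith
      rw [show (2:ℝ) * (3 * (p.2 - p.1)) = 6 * (p.2 - p.1) by ring,
        ENNReal.ofReal_mul (by norm_num : (0:ℝ) ≤ 6)]
      gcongr
      norm_num)
    (by
      intro p hp
      rw [interior_Icc]
      exact Set.nonempty_Ioo.mpr hp.2.1)
    (fun p _ => isClosed_Icc)
    (by
      intro x hx ε' hε'
      have hδx : 0 < δ x := hδpos x (hEsub hx)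
      obtain ⟨v, hv1, hv2, hv3, hv4⟩ := hx.2 (min ε' (δ x / 2)) (by positivity)
      refine ⟨(x, v), ⟨hx, hv1, hv2, ?_, hv4⟩, ?_, rfl⟩
      · have := le_trans hv3 (min_le_right _ _); linarith
      · exact le_trans hv3 (min_le_left _ _))
  set U := ⋃ p ∈ u, Set.Icc (p : ℝ × ℝ).1 p.2 with hU
  have step1 : volume E ≤ volume U := by
    calc volume E ≤ volume ((E \ U) ∪ U) := measure_mono (by
          intro x hx
          by_cases h : x ∈ U
          exacts [Or.inr h, Or.inl ⟨hx, h⟩])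
      _ ≤ volume (E \ U) + volume U := measure_union_le _ _
      _ = volume U := by rw [hcover, zero_add]
  have step2 : volume U ≤ ∑' p : u, volume (Set.Icc (p : ℝ × ℝ).1 (p : ℝ × ℝ).2) :=
    measure_biUnion_le volume hcount _
  have step3 : ∑' p : u, volume (Set.Icc (p : ℝ × ℝ).1 (p : ℝ × ℝ).2)
      ≤ ENNReal.ofReal (2 * ε / η) := by
    rw [ENNReal.tsum_eq_iSup_sum]
    apply iSup_le
    intro s
    classical
    set s' : Finset (ℝ × ℝ) := s.image Subtype.val with hs'
    have hsub' : ∀ p ∈ s', p ∈ t := by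
      intro p hp
      rw [hs', Finset.mem_image] at hp
      obtain ⟨q, _, rfl⟩ := hp
      exact hut q.2
    have hsum : ∑ p ∈ s, volume (Set.Icc (p : ℝ × ℝ).1 (p : ℝ × ℝ).2)
        = ∑ p ∈ s', ENNReal.ofReal (p.2 - p.1) := by
      rw [hs', Finset.sum_image (fun x _ y _ h => Subtype.val_injective h)]
      apply Finset.sum_congr rfl
      intro p _
      exact Real.volume_Icc
    rw [hsum]
    rw [← ENNReal.ofReal_sum_of_nonneg (fun p hp => by
      have := (hsub' p hp).2.1; linarith)]
    apply ENNReal.ofReal_le_ofReal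
    apply sum_bound hf hab ⟨hδpos, hδg⟩ hη s'
    · apply hdisj.subset
      intro p hp
      rw [hs'] at hp
      simp only [Finset.coe_image, Set.mem_image] at hp
      obtain ⟨q, _, rfl⟩ := hp
      exact q.2
    · intro p hp
      have h := hsub' p hp
      exact ⟨(hEsub h.1).1, h.2.1, h.2.2.1, h.2.2.2.1, h.2.2.2.2⟩
  exact le_trans step1 (le_trans step2 step3)

end
end HKAux
end Chunk6

section Chunk7
open Set Filter Topology MeasureTheory HKAux

/-- Every Henstock–Kurzweil integrable function on `[a,b]` is Lebesgue measurable
(with respect to Lebesgue measure restricted to `[a,b]`). -/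
theorem hk_integrable_measurable (a b : ℝ) (hab : a ≤ b) (f : ℝ → ℝ) (α : ℝ)
    (hf : HKIntegral a b f α) :
    AEMeasurable f (MeasureTheory.volume.restrict (Set.Icc a b)) := by
  set μ := MeasureTheory.volume.restrict (Set.Icc a b) with hμ
  set F : ℝ → ℝ := fun c => HKI f a (clamp a b c) with hF
  have hFc : Continuous F := F_continuous hf hab
  set g : ℕ → ℝ → ℝ := fun n x => (F (x + 1 / ((n : ℝ) + 1)) - F x) * ((n : ℝ) + 1) with hg
  have hgm : ∀ n : ℕ, AEMeasurable (g n) μ := by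
    intro n
    exact (((hFc.comp (continuous_add_right _)).sub hFc).mul continuous_const).aemeasurable
  set Ebad : ℕ → Set ℝ := fun m => {x : ℝ | x ∈ Set.Icc a b ∧ ∀ ρ > (0:ℝ), ∃ v, x < v ∧ v ≤ b ∧
      v - x ≤ ρ ∧ (1 / ((m : ℝ) + 1)) * (v - x) < |f x * (v - x) - HKI f x v|} with hEbad
  set Nbad : Set ℝ := (⋃ m : ℕ, Ebad m) ∪ {a, b} with hNbad
  have hnull : MeasureTheory.volume Nbad = 0 := by
    rw [hNbad]
    apply measure_union_null
    · exact measure_iUnion_null fun m => bad_null hf hab (by positivity)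
    · exact (Set.Finite.insert a (Set.finite_singleton b)).measure_zero _
  have key : ∀ x, x ∈ Set.Icc a b → x ∉ Nbad →
      Tendsto (fun n => g n x) atTop (𝓝 (f x)) := by
    intro x hx hxn
    rw [hNbad, Set.mem_union, not_or] at hxn
    have hxa : a < x := lt_of_le_of_ne hx.1 (by
      intro h; exact hxn.2 (by rw [← h]; exact Set.mem_insert _ _))
    have hxb : x < b := lt_of_le_of_ne hx.2 (by
      intro h; exact hxn.2 (by rw [h]; exact Set.mem_insert_of_mem _ rfl))
    have hxE : ∀ m : ℕ, ∃ ρ > (0:ℝ), ∀ v, x < v → v ≤ b → v - x ≤ ρ →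
        |f x * (v - x) - HKI f x v| ≤ (1 / ((m : ℝ) + 1)) * (v - x) := by
      intro m
      have h1 : x ∉ Ebad m := fun h => hxn.1 (Set.mem_iUnion.mpr ⟨m, h⟩)
      rw [hEbad] at h1
      simp only [Set.mem_setOf_eq, not_and, not_forall, not_exists] at h1
      have h2 := h1 hx
      push_neg at h2
      obtain ⟨ρ, hρ1, hρ2⟩ := h2
      exact ⟨ρ, hρ1, hρ2⟩
    rw [Metric.tendsto_atTop]
    intro ε' hε'
    obtain ⟨m, hm⟩ := exists_nat_gt (1 / ε')
    have hη : (1 : ℝ) / ((m : ℝ) + 1) < ε' := by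
      rw [div_lt_iff₀ (by positivity)]
      have h0 : 1 / ε' < (m : ℝ) + 1 := lt_trans hm (by linarith)
      rw [div_lt_iff₀ hε'] at h0
      linarith [mul_comm ε' ((m : ℝ) + 1)]
    obtain ⟨ρ, hρpos, hρ⟩ := hxE m
    obtain ⟨N, hN⟩ := exists_nat_gt (max (1 / ρ) (1 / (b - x)))
    refine ⟨N, fun n hn => ?_⟩
    set h : ℝ := 1 / ((n : ℝ) + 1) with hh
    have hNn : (N : ℝ) ≤ (n : ℝ) := Nat.cast_le.mpr hn
    have hn1 : max (1 / ρ) (1 / (b - x)) < (n : ℝ) + 1 := by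
      calc max (1 / ρ) (1 / (b - x)) < (N : ℝ) := hN
        _ ≤ (n : ℝ) + 1 := by linarith
    have hpos : 0 < h := by rw [hh]; positivity
    have hh1 : h ≤ ρ := by
      rw [hh]
      rw [div_le_iff₀ (by positivity)]
      have h0 : 1 / ρ < (n : ℝ) + 1 := lt_of_le_of_lt (le_max_left _ _) hn1
      rw [div_lt_iff₀ hρpos] at h0
      linarith [mul_comm ρ ((n : ℝ) + 1)]
    have hh2 : x + h ≤ b := by
      have h0 : 1 / (b - x) < (n : ℝ) + 1 := lt_of_le_of_lt (le_max_right _ _) hn1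
      rw [div_lt_iff₀ (by linarith)] at h0
      have : h < b - x := by
        rw [hh, div_lt_iff₀ (by positivity)]
        linarith [mul_comm (b - x) ((n : ℝ) + 1)]
      linarith
    have hkey := hρ (x + h) (by linarith) hh2 (by linarith)
    have hvx : x + h - x = h := by ring
    rw [hvx] at hkey
    have hFx : F x = HKI f a x := by
      show HKI f a (clamp a b x) = HKI f a x
      rw [clamp_eq hxa.le hxb.le]
    have hFxh : F (x + h) = HKI f a (x + h) := by
      show HKI f a (clamp a b (x + h)) = HKI f a (x + h)
      rw [clamp_eq (by linarith) hh2]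
    have hadd : HKI f a (x + h) = HKI f a x + HKI f x (x + h) :=
      HKI_add hf le_rfl hxa.le (by linarith) hh2
    have hFdiff : F (x + h) - F x = HKI f x (x + h) := by
      rw [hFx, hFxh, hadd]; ring
    rw [Real.dist_eq]
    have hgnx : g n x = HKI f x (x + h) * ((n : ℝ) + 1) := by
      show (F (x + 1 / ((n : ℝ) + 1)) - F x) * ((n : ℝ) + 1) = _
      rw [← hh, hFdiff]
    have hmul : h * ((n : ℝ) + 1) = 1 := by
      rw [hh]; field_simp
    have e : (HKI f x (x + h) - f x * h) * ((n : ℝ) + 1)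
        = HKI f x (x + h) * ((n : ℝ) + 1) - f x := by
      rw [sub_mul, mul_assoc, hmul, mul_one]
    rw [hgnx, ← e, abs_mul, abs_of_pos (by positivity : (0:ℝ) < (n : ℝ) + 1)]
    have habs : |HKI f x (x + h) - f x * h| ≤ (1 / ((m : ℝ) + 1)) * h := by
      rw [abs_sub_comm] at hkey
      exact hkey
    calc |HKI f x (x + h) - f x * h| * ((n : ℝ) + 1)
        ≤ (1 / ((m : ℝ) + 1)) * h * ((n : ℝ) + 1) := by
          apply mul_le_mul_of_nonneg_right habs (by positivity)
      _ = 1 / ((m : ℝ) + 1) := by rw [mul_assoc, hmul, mul_one]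
      _ < ε' := hη
  have hae : ∀ᵐ x ∂μ, Tendsto (fun n => g n x) atTop (𝓝 (f x)) := by
    have h1 : ∀ᵐ x ∂μ, x ∈ Set.Icc a b := ae_restrict_mem measurableSet_Icc
    have h2 : ∀ᵐ x ∂μ, x ∉ Nbad := by
      have hle : μ Nbad = 0 := by
        apply le_antisymm _ zero_le
        calc μ Nbad ≤ MeasureTheory.volume Nbad := Measure.restrict_le_self _
          _ = 0 := hnull
      exact (MeasureTheory.measure_eq_zero_iff_ae_notMem).mp hle
    filter_upwards [h1, h2] with x hx1 hx2
    exact key x hx1 hx2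
  exact aemeasurable_of_tendsto_metrizable_ae' hgm hae

end Chunk7
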